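/- Let Θ = (α, β, γ) be an autotopism of a Latin square L of order n and let p be a prime such that both α and β have at least one cycle of length p. If γ has no cycle of length p, then the number of fixed points of γ is at least p times the maximum of the number of p-cycles of α and the number of p-cycles of β. -/

import Mathlib

open Classical

/-- Number of cycles of length `r` in the disjoint cycle decomposition of `δ`
(fixed points count as cycles of length 1). -/
noncomputable def cyclesOfLen {n : ℕ} (δ : Equiv.Perm (Fin n)) (r : ℕ) : ℕ :=
  (Finset.univ.filter fun x : Fin n => Function.minimalPeriod (⇑δ) x = r).card / r

/-- `L` is (the table of) a Latin square of order `n`. -/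
def IsLatinSquare {n : ℕ} (L : Fin n → Fin n → Fin n) : Prop :=
  (∀ i, Function.Bijective (L i)) ∧ ∀ j, Function.Bijective fun i => L i j

/-- `(α, β, γ)` is an autotopism of `L`: `(i,j,k) ∈ L → (α i, β j, γ k) ∈ L`. -/
def IsAutotopism {n : ℕ} (L : Fin n → Fin n → Fin n)
    (α β γ : Equiv.Perm (Fin n)) : Prop :=
  ∀ i j, L (α i) (β j) = γ (L i j)

/-- If `γ` has no `p`-cycle (`p` prime) and `γ^[p]` fixes `k`, then `γ` fixes `k`. -/
lemma fix_of_no_pcycle {n : ℕ} (γ : Equiv.Perm (Fin n)) (p : ℕ) (hp : p.Prime)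
    (hγ : cyclesOfLen γ p = 0) (k : Fin n) (hk : (⇑γ)^[p] k = k) :
    Function.minimalPeriod (⇑γ) k = 1 := by
  have hper : Function.IsPeriodicPt (⇑γ) p k := hk
  have hdvd := hper.minimalPeriod_dvd
  rcases hp.eq_one_or_self_of_dvd _ hdvd with h1 | hP
  · exact h1
  · exfalso
    -- the γ-orbit of k gives p points of minimal period p
    set T := Finset.univ.filter fun x : Fin n => Function.minimalPeriod (⇑γ) x = p with hT
    have hmem : ∀ t : ℕ, Function.minimalPeriod (⇑γ) ((⇑γ)^[t] k) = p := by
      intro t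
      have hyper : Function.IsPeriodicPt (⇑γ) p ((⇑γ)^[t] k) := by
        show (⇑γ)^[p] ((⇑γ)^[t] k) = (⇑γ)^[t] k
        rw [← Function.iterate_add_apply, Nat.add_comm, Function.iterate_add_apply, hk]
      have hdvd' := hyper.minimalPeriod_dvd
      rcases hp.eq_one_or_self_of_dvd _ hdvd' with h1' | hP'
      · exfalso
        have hfix : γ ((⇑γ)^[t] k) = (⇑γ)^[t] k := by
          have h := Function.isPeriodicPt_minimalPeriod (⇑γ) ((⇑γ)^[t] k)
          rw [h1'] at h
          have h2 : (⇑γ)^[1] ((⇑γ)^[t] k) = (⇑γ)^[t] k := h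
          rwa [Function.iterate_one] at h2
        have heq : (⇑γ)^[t] (γ k) = (⇑γ)^[t] k := by
          rw [← Function.iterate_succ_apply, Function.iterate_succ_apply', hfix]
        have hk1 : γ k = k := (γ.injective.iterate t) heq
        have h3 : Function.minimalPeriod (⇑γ) k = 1 :=
          Function.minimalPeriod_eq_one_iff_isFixedPt.mpr hk1
        have := hp.one_lt
        omega
      · exact hP'
    have hinj : Set.InjOn (fun t : Fin p => (⇑γ)^[(t : ℕ)] k) ↑(Finset.univ : Finset (Fin p)) := by
      have key : ∀ a b : Fin p, (a : ℕ) ≤ (b : ℕ) →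
          (⇑γ)^[(a : ℕ)] k = (⇑γ)^[(b : ℕ)] k → a = b := by
        intro a b hle hab
        have hb : (b : ℕ) = (a : ℕ) + ((b : ℕ) - (a : ℕ)) := by omega
        rw [hb, Function.iterate_add_apply] at hab
        have hc : (⇑γ)^[(b : ℕ) - (a : ℕ)] k = k := (γ.injective.iterate (a : ℕ)) hab.symm
        have hc2 : (b : ℕ) - (a : ℕ) = 0 := by
          by_contra hne
          have hpos : 0 < (b : ℕ) - (a : ℕ) := Nat.pos_of_ne_zero hne
          have h4 := Function.IsPeriodicPt.minimalPeriod_le hpos hc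
          rw [hP] at h4
          have := b.isLt
          omega
        have := a.isLt
        have := b.isLt
        exact Fin.ext (by omega)
      intro a _ b _ hab
      simp only at hab
      rcases le_total (a : ℕ) (b : ℕ) with h | h
      · exact key a b h hab
      · exact (key b a h hab.symm).symm
    have hcard : p ≤ T.card := by
      have h5 : (Finset.univ : Finset (Fin p)).card ≤ T.card :=
        Finset.card_le_card_of_injOn (fun t : Fin p => (⇑γ)^[(t : ℕ)] k)
        (fun t _ => by
          rw [hT, Finset.mem_coe, Finset.mem_filter]
          exact ⟨Finset.mem_univ _, hmem (t : ℕ)⟩) hinj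
      simpa using h5
    have hlt : T.card < p := by
      have h6 : T.card / p = 0 := hγ
      exact ((Nat.div_eq_zero_iff).mp h6).resolve_left hp.ne_zero
    omega

theorem stmt10 {n : ℕ} (L : Fin n → Fin n → Fin n) (α β γ : Equiv.Perm (Fin n))
    (hL : IsLatinSquare L) (hA : IsAutotopism L α β γ) (p : ℕ) (hp : p.Prime)
    (hα : 0 < cyclesOfLen α p) (hβ : 0 < cyclesOfLen β p)
    (hγ : cyclesOfLen γ p = 0) :
    p * max (cyclesOfLen α p) (cyclesOfLen β p) ≤ cyclesOfLen γ 1 := by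
  set A := Finset.univ.filter fun x : Fin n => Function.minimalPeriod (⇑α) x = p with hAdef
  set B := Finset.univ.filter fun x : Fin n => Function.minimalPeriod (⇑β) x = p with hBdef
  set F := Finset.univ.filter fun x : Fin n => Function.minimalPeriod (⇑γ) x = 1 with hFdef
  have hiter : ∀ (t : ℕ) (i j : Fin n),
      L ((⇑α)^[t] i) ((⇑β)^[t] j) = (⇑γ)^[t] (L i j) := by
    intro t
    induction t with
    | zero => intro i j; simp
    | succ t ih =>
      intro i j
      rw [Function.iterate_succ_apply', Function.iterate_succ_apply',
        Function.iterate_succ_apply', hA, ih]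
  have hAne : A.Nonempty := by
    rw [← Finset.card_pos]
    have : 0 < A.card / p := hα
    have := Nat.div_le_self A.card p
    omega
  have hBne : B.Nonempty := by
    rw [← Finset.card_pos]
    have : 0 < B.card / p := hβ
    have := Nat.div_le_self B.card p
    omega
  obtain ⟨i₀, hi₀⟩ := hAne
  obtain ⟨j₀, hj₀⟩ := hBne
  simp only [hAdef, Finset.mem_filter] at hi₀
  simp only [hBdef, Finset.mem_filter] at hj₀
  -- columns injection: A → F via i ↦ L i j₀
  have hAcard : A.card ≤ F.card := by
    apply Finset.card_le_card_of_injOn (fun i => L i j₀)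
    · intro i hi
      simp only [hAdef, Finset.mem_coe, Finset.mem_filter] at hi
      simp only [hFdef, Finset.mem_coe, Finset.mem_filter, Finset.mem_univ, true_and]
      apply fix_of_no_pcycle γ p hp hγ
      have hip : (⇑α)^[p] i = i := by
        have := Function.isPeriodicPt_minimalPeriod (⇑α) i
        rwa [hi.2] at this
      have hjp : (⇑β)^[p] j₀ = j₀ := by
        have := Function.isPeriodicPt_minimalPeriod (⇑β) j₀
        rwa [hj₀.2] at this
      have := hiter p i j₀
      rw [hip, hjp] at this
      exact this.symm
    · exact fun a _ b _ h => (hL.2 j₀).1 h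
  have hBcard : B.card ≤ F.card := by
    apply Finset.card_le_card_of_injOn (fun j => L i₀ j)
    · intro j hj
      simp only [hBdef, Finset.mem_coe, Finset.mem_filter] at hj
      simp only [hFdef, Finset.mem_coe, Finset.mem_filter, Finset.mem_univ, true_and]
      apply fix_of_no_pcycle γ p hp hγ
      have hip : (⇑α)^[p] i₀ = i₀ := by
        have := Function.isPeriodicPt_minimalPeriod (⇑α) i₀
        rwa [hi₀.2] at this
      have hjp : (⇑β)^[p] j = j := by
        have := Function.isPeriodicPt_minimalPeriod (⇑β) j
        rwa [hj.2] at this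
      have := hiter p i₀ j
      rw [hip, hjp] at this
      exact this.symm
    · exact fun a _ b _ h => (hL.1 i₀).1 h
  have hγ1 : cyclesOfLen γ 1 = F.card := by
    unfold cyclesOfLen
    rw [← hFdef, Nat.div_one]
  rw [hγ1]
  have hmulA : p * cyclesOfLen α p ≤ A.card := by
    unfold cyclesOfLen
    rw [← hAdef, Nat.mul_comm]
    exact Nat.div_mul_le_self A.card p
  have hmulB : p * cyclesOfLen β p ≤ B.card := by
    unfold cyclesOfLen
    rw [← hBdef, Nat.mul_comm]
    exact Nat.div_mul_le_self B.card p
  rcases max_cases (cyclesOfLen α p) (cyclesOfLen β p) with ⟨h, _⟩ | ⟨h, _⟩ <;> rw [h] <;> omega
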